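/- Any integral moving-phantom mechanism induced by a single-minded proportional and upper-quota capped phantom system together with floor rounding satisfies single-minded quota-proportionality: on any single-minded integral profile, the output gives each alternative j an amount in {⌊b·n_j/n⌋, ⌈b·n_j/n⌉} where n_j is the number of voters voting b on alternative j. -/

import Mathlib

/-- The median of `2n+1` naturals: the `(n+1)`-st smallest. -/
def medianN (n : ℕ) (v : Fin (2*n+1) → ℕ) : ℕ :=
  (Multiset.sort (Multiset.map v Finset.univ.val) (· ≤ ·)).getD n 0

/-- Merge `n` votes and `n+1` phantoms into one vector of `2n+1` values. -/
def mergeVN (n : ℕ) (x : Fin n → ℕ) (y : Fin (n+1) → ℕ) : Fin (2*n+1) → ℕ :=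
  fun i => if h : (i : ℕ) < n then x ⟨i, h⟩
           else y ⟨(i : ℕ) - n, by have := i.isLt; omega⟩

-- sorted list counting lemmas
lemma sorted_getElem_le {l : List ℕ} (hs : l.Pairwise (· ≤ ·)) {k : ℕ} (hk : k < l.length)
    {a : ℕ} (h : k + 1 ≤ l.countP (fun x => decide (x ≤ a))) : l[k] ≤ a := by
  by_contra hlt
  push_neg at hlt
  have hsplit : l.countP (fun x => decide (x ≤ a))
      = (l.take k).countP (fun x => decide (x ≤ a)) + (l.drop k).countP (fun x => decide (x ≤ a)) := by
    conv_lhs => rw [← List.take_append_drop k l]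
    exact List.countP_append
  have hdropsort : (l.drop k).Pairwise (· ≤ ·) := List.Pairwise.sublist (List.drop_sublist k l) hs
  rw [List.drop_eq_getElem_cons hk] at hdropsort
  rw [List.pairwise_cons] at hdropsort
  have h0 : (l.drop k).countP (fun x => decide (x ≤ a)) = 0 := by
    apply List.countP_eq_zero.mpr
    intro x hx
    rw [List.drop_eq_getElem_cons hk, List.mem_cons] at hx
    simp only [decide_eq_true_eq]
    rcases hx with rfl | hx
    · omega
    · have := hdropsort.1 x hx; omega
  have h1 : (l.take k).countP (fun x => decide (x ≤ a)) ≤ k := by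
    calc (l.take k).countP _ ≤ (l.take k).length := List.countP_le_length
    _ ≤ k := by simp
  omega

lemma le_sorted_getElem {l : List ℕ} (hs : l.Pairwise (· ≤ ·)) {k : ℕ} (hlen : l.length = 2*k+1)
    {a : ℕ} (h : k + 1 ≤ l.countP (fun x => decide (a ≤ x))) :
    a ≤ l[k]'(by omega) := by
  by_contra hlt
  push_neg at hlt
  have hk : k < l.length := by omega
  have hsplit : l.countP (fun x => decide (a ≤ x))
      = (l.take (k+1)).countP (fun x => decide (a ≤ x)) + (l.drop (k+1)).countP (fun x => decide (a ≤ x)) := by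
    conv_lhs => rw [← List.take_append_drop (k+1) l]
    exact List.countP_append
  have h0 : (l.take (k+1)).countP (fun x => decide (a ≤ x)) = 0 := by
    apply List.countP_eq_zero.mpr
    intro x hx
    simp only [decide_eq_true_eq]
    obtain ⟨i, hi, rfl⟩ := List.getElem_of_mem hx
    rw [List.getElem_take]
    have hil : i < l.length := by have := hi; simp at this; omega
    have : l[i] ≤ l[k] := by
      rcases Nat.lt_or_ge i k with hik | hik
      · exact hs.rel_get_of_le (by simpa using Nat.le_of_lt hik)
      · have : i = k := by have := hi; simp at this; omega
        subst this; rfl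
    omega
  have h1 : (l.drop (k+1)).countP (fun x => decide (a ≤ x)) ≤ k := by
    calc (l.drop (k+1)).countP _ ≤ (l.drop (k+1)).length := List.countP_le_length
    _ ≤ k := by simp [hlen]; omega
  omega

section median
variable {n : ℕ} (v : Fin (2*n+1) → ℕ)

lemma medianN_length :
    (Multiset.sort (Multiset.map v Finset.univ.val) (· ≤ ·)).length = 2*n+1 := by
  rw [Multiset.length_sort]
  simp

lemma medianN_countP (p : ℕ → Prop) [DecidablePred p] :
    (Multiset.sort (Multiset.map v Finset.univ.val) (· ≤ ·)).countP (fun x => decide (p x))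
      = (Finset.univ.filter (fun i => p (v i))).card := by
  rw [← Multiset.coe_countP, Multiset.sort_eq, Multiset.countP_map]
  rfl

lemma medianN_eq_getElem :
    medianN n v = (Multiset.sort (Multiset.map v Finset.univ.val) (· ≤ ·))[n]'(by
      rw [medianN_length]; omega) := by
  unfold medianN
  rw [List.getD_eq_getElem]

lemma medianN_le {a : ℕ}
    (h : n + 1 ≤ (Finset.univ.filter (fun i => v i ≤ a)).card) : medianN n v ≤ a := by
  rw [medianN_eq_getElem]
  apply sorted_getElem_le (Multiset.pairwise_sort _ _)
  rw [medianN_countP v (fun x => x ≤ a)]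
  exact h

lemma le_medianN {a : ℕ}
    (h : n + 1 ≤ (Finset.univ.filter (fun i => a ≤ v i)).card) : a ≤ medianN n v := by
  rw [medianN_eq_getElem]
  apply le_sorted_getElem (Multiset.pairwise_sort _ _) (medianN_length v)
  rw [medianN_countP v (fun x => a ≤ x)]
  exact h

end median

lemma card_filter_merge (n : ℕ) (x : Fin n → ℕ) (y : Fin (n+1) → ℕ)
    (p : ℕ → Prop) [DecidablePred p] :
    (Finset.univ.filter (fun i : Fin (2*n+1) => p (mergeVN n x y i))).card
      = (Finset.univ.filter (fun i : Fin n => p (x i))).card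
        + (Finset.univ.filter (fun k : Fin (n+1) => p (y k))).card := by
  have hnn : n + (n+1) = 2*n+1 := by ring
  rw [Finset.card_filter, Finset.card_filter, Finset.card_filter]
  rw [← Fintype.sum_equiv (finCongr hnn)
    (fun i => if p (mergeVN n x y (finCongr hnn i)) then 1 else 0)
    (fun i => if p (mergeVN n x y i) then 1 else 0) (fun i => rfl)]
  rw [Fin.sum_univ_add]
  congr 1
  · apply Finset.sum_congr rfl
    intro i _
    congr 1
    have : mergeVN n x y (finCongr hnn (Fin.castAdd (n+1) i)) = x i := by
      simp [mergeVN, i.isLt]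
    rw [this]
  · apply Finset.sum_congr rfl
    intro k _
    congr 1
    have : mergeVN n x y (finCongr hnn (Fin.natAdd n k)) = y k := by
      simp [mergeVN]
    rw [this]

lemma medianN_single (n b : ℕ) (hb : 0 < b) (x : Fin n → ℕ) (y : Fin (n+1) → ℕ)
    (c : ℕ) (hc : c ≤ n)
    (hx : (Finset.univ.filter (fun i => x i = b)).card = c)
    (hx0 : ∀ i, x i = b ∨ x i = 0)
    (hyb : ∀ k, y k ≤ b)
    (hyanti : ∀ k k' : Fin (n+1), k ≤ k' → y k' ≤ y k) :
    medianN n (mergeVN n x y) = y ⟨n - c, by omega⟩ := by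
  set a := y ⟨n - c, by omega⟩ with ha
  have hab : a ≤ b := hyb _
  apply le_antisymm
  · apply medianN_le
    rw [card_filter_merge n x y (fun z => z ≤ a)]
    have h1 : n - c ≤ (Finset.univ.filter (fun i : Fin n => x i ≤ a)).card := by
      have hsub : (Finset.univ.filter (fun i : Fin n => ¬ x i = b))
          ⊆ (Finset.univ.filter (fun i : Fin n => x i ≤ a)) := by
        intro i hi
        rw [Finset.mem_filter] at hi ⊢
        have := hx0 i
        refine ⟨Finset.mem_univ _, ?_⟩
        have : x i = 0 := by tauto
        omega
      have hcard : (Finset.univ.filter (fun i : Fin n => ¬ x i = b)).card = n - c := by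
        have := Finset.card_filter_add_card_filter_not
          (s := (Finset.univ : Finset (Fin n))) (p := fun i => x i = b)
        simp only [Finset.card_univ, Fintype.card_fin] at this
        omega
      calc n - c = _ := hcard.symm
      _ ≤ _ := Finset.card_le_card hsub
    have h2 : c + 1 ≤ (Finset.univ.filter (fun k : Fin (n+1) => y k ≤ a)).card := by
      have hsub : Finset.Ici (⟨n - c, by omega⟩ : Fin (n+1))
          ⊆ (Finset.univ.filter (fun k : Fin (n+1) => y k ≤ a)) := by
        intro k hk
        rw [Finset.mem_Ici] at hk
        rw [Finset.mem_filter]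
        exact ⟨Finset.mem_univ _, hyanti _ _ hk⟩
      have hcard : (Finset.Ici (⟨n - c, by omega⟩ : Fin (n+1))).card = c + 1 := by
        rw [Fin.card_Ici]; simp; omega
      calc c + 1 = _ := hcard.symm
      _ ≤ _ := Finset.card_le_card hsub
    omega
  · apply le_medianN
    rw [card_filter_merge n x y (fun z => a ≤ z)]
    have h1 : c ≤ (Finset.univ.filter (fun i : Fin n => a ≤ x i)).card := by
      have hsub : (Finset.univ.filter (fun i : Fin n => x i = b))
          ⊆ (Finset.univ.filter (fun i : Fin n => a ≤ x i)) := by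
        intro i hi
        rw [Finset.mem_filter] at hi ⊢
        refine ⟨Finset.mem_univ _, ?_⟩
        omega
      calc c = _ := hx.symm
      _ ≤ _ := Finset.card_le_card hsub
    have h2 : n - c + 1 ≤ (Finset.univ.filter (fun k : Fin (n+1) => a ≤ y k)).card := by
      have hsub : Finset.Iic (⟨n - c, by omega⟩ : Fin (n+1))
          ⊆ (Finset.univ.filter (fun k : Fin (n+1) => a ≤ y k)) := by
        intro k hk
        rw [Finset.mem_Iic] at hk
        rw [Finset.mem_filter]
        exact ⟨Finset.mem_univ _, hyanti _ _ hk⟩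
      have hcard : (Finset.Iic (⟨n - c, by omega⟩ : Fin (n+1))).card = n - c + 1 := by
        rw [Fin.card_Iic]
      calc n - c + 1 = _ := hcard.symm
      _ ≤ _ := Finset.card_le_card hsub
    omega


/-- The integral moving-phantom mechanism induced (via floor rounding) by a
single-minded proportional and upper-quota capped fractional phantom system is
single-minded quota-proportional: on a single-minded profile where `n_j` voters
vote `b` on alternative `j`, any output (vector of medians at a normalization
time) gives alternative `j` an amount in `{⌊b·n_j/n⌋, ⌈b·n_j/n⌉}`. -/
theorem stmt8 (n m b : ℕ) (hn : 0 < n) (hm : 2 ≤ m) (hb : 0 < b)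
    -- fractional phantom system
    (f : Fin (n+1) → ℝ → ℝ)
    (hmono : ∀ k, MonotoneOn (f k) (Set.Icc 0 1))
    (hf0 : ∀ k, f k 0 = 0)
    (hfrange : ∀ k, ∀ t ∈ Set.Icc (0:ℝ) 1, 0 ≤ f k t ∧ f k t ≤ b)
    (hford : ∀ k k' : Fin (n+1), k ≤ k' → ∀ t ∈ Set.Icc (0:ℝ) 1, f k' t ≤ f k t)
    -- upper-quota capped
    (hcap : ∀ k : Fin (n+1), f k 1 = ⌈((b : ℝ) * ((n : ℝ) - (k : ℕ))) / n⌉)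
    -- single-minded proportional: on single-minded profiles, at some
    -- normalization time the medians equal the average
    (hsmp : ∀ nj : Fin m → ℕ, ∑ j, nj j = n →
      ∃ t ∈ Set.Icc (0:ℝ) 1,
        ∀ j, f ⟨n - nj j, by omega⟩ t = ((b : ℝ) * (nj j : ℝ)) / n)
    -- the induced integral phantom system
    (φ : Fin (n+1) → Fin m → ℕ → ℕ)
    (hφmono : ∀ k j, Monotone (φ k j))
    (hφ0 : ∀ k j, φ k j 0 = 0)
    (hφub : ∀ k j τ, φ k j τ ≤ b)
    (hφord : ∀ (k k' : Fin (n+1)) (j : Fin m) (τ : ℕ), k ≤ k' → φ k' j τ ≤ φ k j τ)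
    (hstep : ∀ τ : ℕ, ∑ k, ∑ j, (φ k j (τ+1) - φ k j τ) ≤ 1)
    -- floor rounding: every floored phantom configuration is attained
    (hfloor : ∀ t ∈ Set.Icc (0:ℝ) 1, ∃ τ ≤ b*m*(n+1), ∀ k j, (φ k j τ : ℤ) = ⌊f k t⌋)
    -- single-minded profile
    (P : Fin n → Fin m → ℕ)
    (hsm : ∀ i, ∃ j, P i j = b ∧ ∀ j', j' ≠ j → P i j' = 0)
    (nj : Fin m → ℕ)
    (hnjdef : ∀ j, nj j = (Finset.univ.filter (fun i => P i j = b)).card)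
    -- any normalization time
    (τs : ℕ) (hτs : τs ≤ b*m*(n+1))
    (hnorm : ∑ j, medianN n (mergeVN n (fun i => P i j) (fun k => φ k j τs)) = b) :
    ∀ j, (⌊((b : ℝ) * (nj j : ℝ)) / n⌋ ≤
            (medianN n (mergeVN n (fun i => P i j) (fun k => φ k j τs)) : ℤ)) ∧
         ((medianN n (mergeVN n (fun i => P i j) (fun k => φ k j τs)) : ℤ) ≤
            ⌈((b : ℝ) * (nj j : ℝ)) / n⌉) := by
  -- basic facts about the profile
  have hPcases : ∀ i j, P i j = b ∨ P i j = 0 := by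
    intro i j
    obtain ⟨j0, hj0, hother⟩ := hsm i
    by_cases hjj : j = j0
    · subst hjj; left; exact hj0
    · right; exact hother j hjj
  have hnjle : ∀ j, nj j ≤ n := by
    intro j
    rw [hnjdef]
    calc (Finset.univ.filter (fun i => P i j = b)).card
        ≤ (Finset.univ : Finset (Fin n)).card := Finset.card_le_card (Finset.filter_subset _ _)
      _ = n := by simp
  have hsum : ∑ j, nj j = n := by
    have : ∀ i : Fin n, (Finset.univ.filter (fun j : Fin m => P i j = b)).card = 1 := by
      intro i
      obtain ⟨j0, hj0, hother⟩ := hsm i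
      have : (Finset.univ.filter (fun j : Fin m => P i j = b)) = {j0} := by
        ext j
        simp only [Finset.mem_filter, Finset.mem_univ, true_and, Finset.mem_singleton]
        constructor
        · intro hpb
          by_contra hne
          have := hother j hne
          omega
        · intro h; subst h; exact hj0
      rw [this, Finset.card_singleton]
    calc ∑ j, nj j = ∑ j, ∑ i : Fin n, if P i j = b then 1 else 0 := by
          apply Finset.sum_congr rfl
          intro j _
          rw [hnjdef j, Finset.card_filter]
      _ = ∑ i : Fin n, ∑ j, if P i j = b then 1 else 0 := Finset.sum_comm
      _ = ∑ i : Fin n, 1 := by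
          apply Finset.sum_congr rfl
          intro i _
          rw [← Finset.card_filter]
          exact this i
      _ = n := by simp
  -- median formula
  have hmed : ∀ (j : Fin m) (τ : ℕ),
      medianN n (mergeVN n (fun i => P i j) (fun k => φ k j τ))
        = φ ⟨n - nj j, by omega⟩ j τ := by
    intro j τ
    exact medianN_single n b hb _ _ (nj j) (hnjle j) (hnjdef j).symm
      (fun i => hPcases i j) (fun k => hφub k j τ)
      (fun k k' hk => hφord k k' j τ hk)
  set K : Fin m → Fin (n+1) := fun j => ⟨n - nj j, by omega⟩ with hK
  -- special times
  obtain ⟨t, ht, hft⟩ := hsmp nj hsum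
  obtain ⟨τ1, hτ1le, hτ1⟩ := hfloor t ht
  obtain ⟨τ2, hτ2le, hτ2⟩ := hfloor 1 (by constructor <;> norm_num)
  have hfloorval : ∀ j, (φ (K j) j τ1 : ℤ) = ⌊((b : ℝ) * (nj j : ℝ)) / n⌋ := by
    intro j
    rw [hτ1 (K j) j, hft j]
  have hceilval : ∀ j, (φ (K j) j τ2 : ℤ) = ⌈((b : ℝ) * (nj j : ℝ)) / n⌉ := by
    intro j
    rw [hτ2 (K j) j, hcap (K j)]
    rw [Int.floor_intCast]
    congr 2
    have : ((K j : ℕ) : ℝ) = (n : ℝ) - (nj j : ℝ) := by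
      simp only [hK]
      push_cast [Nat.cast_sub (hnjle j)]
      ring
    rw [this]
    ring
  -- the sum of medians at τs
  have hsumM : ∑ j, (φ (K j) j τs : ℤ) = (b : ℤ) := by
    have : ∑ j, φ (K j) j τs = b := by
      rw [← hnorm]
      apply Finset.sum_congr rfl
      intro j _
      exact (hmed j τs).symm
    exact_mod_cast this
  -- sum of exact quotas equals b
  have hxsum : ∑ j, ((b : ℝ) * (nj j : ℝ)) / n = (b : ℝ) := by
    rw [← Finset.sum_div, ← Finset.mul_sum]
    have : ∑ j, (nj j : ℝ) = (n : ℝ) := by exact_mod_cast congrArg Nat.cast hsum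
    rw [this]
    field_simp
  have hfloorsum : ∑ j, ⌊((b : ℝ) * (nj j : ℝ)) / n⌋ ≤ (b : ℤ) := by
    have h' : ((∑ j, ⌊((b : ℝ) * (nj j : ℝ)) / n⌋ : ℤ) : ℝ)
        ≤ ∑ j, ((b : ℝ) * (nj j : ℝ)) / n := by
      push_cast
      exact Finset.sum_le_sum (fun j _ => Int.floor_le _)
    rw [hxsum] at h'
    exact_mod_cast h'
  have hceilsum : (b : ℤ) ≤ ∑ j, ⌈((b : ℝ) * (nj j : ℝ)) / n⌉ := by
    have h' : (∑ j, ((b : ℝ) * (nj j : ℝ)) / n)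
        ≤ ((∑ j, ⌈((b : ℝ) * (nj j : ℝ)) / n⌉ : ℤ) : ℝ) := by
      push_cast
      exact Finset.sum_le_sum (fun j _ => Int.le_ceil _)
    rw [hxsum] at h'
    exact_mod_cast h'
  intro j
  rw [hmed j τs]
  rcases le_or_gt τ1 τs with h1 | h1
  · have hlow : ∀ j', ⌊((b : ℝ) * (nj j' : ℝ)) / n⌋ ≤ (φ (K j') j' τs : ℤ) := by
      intro j'
      rw [← hfloorval j']
      exact_mod_cast hφmono (K j') j' h1
    rcases le_or_gt τs τ2 with h2 | h2
    · refine ⟨hlow j, ?_⟩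
      rw [← hceilval j]
      exact_mod_cast hφmono (K j) j h2
    · -- τ2 < τs : medians are at least the ceilings, so all equal ceilings
      have hge : ∀ j', ⌈((b : ℝ) * (nj j' : ℝ)) / n⌉ ≤ (φ (K j') j' τs : ℤ) := by
        intro j'
        rw [← hceilval j']
        exact_mod_cast hφmono (K j') j' (le_of_lt h2)
      have hzero : ∑ j', ((φ (K j') j' τs : ℤ) - ⌈((b : ℝ) * (nj j' : ℝ)) / n⌉) = 0 := by
        rw [Finset.sum_sub_distrib, hsumM]
        have : ∑ j', ⌈((b : ℝ) * (nj j' : ℝ)) / n⌉ ≤ (b : ℤ) := by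
          rw [← hsumM]
          exact Finset.sum_le_sum (fun j' _ => hge j')
        omega
      have heq : (φ (K j) j τs : ℤ) = ⌈((b : ℝ) * (nj j : ℝ)) / n⌉ := by
        have := (Finset.sum_eq_zero_iff_of_nonneg
          (fun j' _ => sub_nonneg.mpr (hge j'))).mp hzero j (Finset.mem_univ j)
        omega
      exact ⟨heq ▸ Int.floor_le_ceil _, le_of_eq heq⟩
  · -- τs < τ1 : medians are at most the floors, so all equal floors
    have hle : ∀ j', (φ (K j') j' τs : ℤ) ≤ ⌊((b : ℝ) * (nj j' : ℝ)) / n⌋ := by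
      intro j'
      rw [← hfloorval j']
      exact_mod_cast hφmono (K j') j' (le_of_lt h1)
    have hzero : ∑ j', (⌊((b : ℝ) * (nj j' : ℝ)) / n⌋ - (φ (K j') j' τs : ℤ)) = 0 := by
      have hnn : 0 ≤ ∑ j', (⌊((b : ℝ) * (nj j' : ℝ)) / n⌋ - (φ (K j') j' τs : ℤ)) :=
        Finset.sum_nonneg (fun j' _ => sub_nonneg.mpr (hle j'))
      rw [Finset.sum_sub_distrib, hsumM] at hnn ⊢
      omega
    have heq : (φ (K j) j τs : ℤ) = ⌊((b : ℝ) * (nj j : ℝ)) / n⌋ := by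
      have := (Finset.sum_eq_zero_iff_of_nonneg
        (fun j' _ => sub_nonneg.mpr (hle j'))).mp hzero j (Finset.mem_univ j)
      omega
    exact ⟨le_of_eq heq.symm, heq ▸ Int.floor_le_ceil _⟩
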